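/- Let N, N₀ be symmetric matrices in ℝ^{n×n} with N₀ positive definite, let p, p₀ ∈ ℝ^n, b₀, ν ∈ ℝ, and suppose ξ* ∈ ℝ and x* ∈ ℝ^n satisfy: (i) (N + ξ*N₀)x* + p + ξ*p₀ = 0, (ii) x*ᵀN₀x* + 2p₀ᵀx* + b₀ − ν = 0, and (iii) N + ξ*N₀ ⪰ 0. Then x* is a global minimizer of q(x) = xᵀNx + 2pᵀx over the set {x : xᵀN₀x + 2p₀ᵀx + b₀ = ν}. -/

import Mathlib

open Matrix

/-- Sufficiency of the Moré optimality conditions for the generalized trust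
region subproblem (GTRS). -/
theorem stmt_13 (n : ℕ) (N N₀ : Matrix (Fin n) (Fin n) ℝ)
    (hN : N.IsSymm) (hN₀sym : N₀.IsSymm) (hN₀ : N₀.PosDef)
    (p p₀ : Fin n → ℝ) (b₀ ν : ℝ) (ξ : ℝ) (xstar : Fin n → ℝ)
    (hstat : (N + ξ • N₀) *ᵥ xstar + p + ξ • p₀ = 0)
    (hfeas : xstar ⬝ᵥ N₀ *ᵥ xstar + 2 * (p₀ ⬝ᵥ xstar) + b₀ - ν = 0)
    (hpsd : (N + ξ • N₀).PosSemidef) :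
    ∀ x : Fin n → ℝ, x ⬝ᵥ N₀ *ᵥ x + 2 * (p₀ ⬝ᵥ x) + b₀ = ν →
      xstar ⬝ᵥ N *ᵥ xstar + 2 * (p ⬝ᵥ xstar) ≤ x ⬝ᵥ N *ᵥ x + 2 * (p ⬝ᵥ x) := by
  intro x hx
  set M := N + ξ • N₀ with hMdef
  have hMsym : M.IsSymm := by
    unfold Matrix.IsSymm at *
    simp [hMdef, Matrix.transpose_add, Matrix.transpose_smul, hN, hN₀sym]
  have hsymm : ∀ u v : Fin n → ℝ, u ⬝ᵥ M *ᵥ v = v ⬝ᵥ M *ᵥ u := by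
    intro u v
    rw [Matrix.dotProduct_mulVec, ← Matrix.mulVec_transpose, hMsym,
      dotProduct_comm]
  have hstat' : M *ᵥ xstar = -(p + ξ • p₀) := by
    rw [add_assoc] at hstat
    exact eq_neg_of_add_eq_zero_left hstat
  have hMx : ∀ v : Fin n → ℝ, v ⬝ᵥ M *ᵥ v = v ⬝ᵥ N *ᵥ v + ξ * (v ⬝ᵥ N₀ *ᵥ v) := by
    intro v
    simp [hMdef, Matrix.add_mulVec, Matrix.smul_mulVec, dotProduct_add,
      dotProduct_smul, smul_eq_mul]
  have hxMs : x ⬝ᵥ M *ᵥ xstar = -(x ⬝ᵥ p + ξ * (x ⬝ᵥ p₀)) := by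
    rw [hstat']
    simp [dotProduct_add, dotProduct_smul, smul_eq_mul]
  have hsMs : xstar ⬝ᵥ M *ᵥ xstar = -(xstar ⬝ᵥ p + ξ * (xstar ⬝ᵥ p₀)) := by
    rw [hstat']
    simp [dotProduct_add, dotProduct_smul, smul_eq_mul]
  have key : 0 ≤ (x - xstar) ⬝ᵥ M *ᵥ (x - xstar) := by
    simpa using hpsd.dotProduct_mulVec_nonneg (x - xstar)
  have hexp : (x - xstar) ⬝ᵥ M *ᵥ (x - xstar)
      = x ⬝ᵥ M *ᵥ x - x ⬝ᵥ M *ᵥ xstar - x ⬝ᵥ M *ᵥ xstar + xstar ⬝ᵥ M *ᵥ xstar := by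
    rw [sub_dotProduct, Matrix.mulVec_sub, dotProduct_sub, dotProduct_sub,
      hsymm xstar x]
    ring
  have e1 := hMx x
  have e2 := hMx xstar
  have c1 : x ⬝ᵥ N₀ *ᵥ x + 2 * (p₀ ⬝ᵥ x) = ν - b₀ := by linarith
  have c2 : xstar ⬝ᵥ N₀ *ᵥ xstar + 2 * (p₀ ⬝ᵥ xstar) = ν - b₀ := by linarith
  have hpx : p ⬝ᵥ x = x ⬝ᵥ p := dotProduct_comm _ _
  have hps : p ⬝ᵥ xstar = xstar ⬝ᵥ p := dotProduct_comm _ _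
  have hp0x : p₀ ⬝ᵥ x = x ⬝ᵥ p₀ := dotProduct_comm _ _
  have hp0s : p₀ ⬝ᵥ xstar = xstar ⬝ᵥ p₀ := dotProduct_comm _ _
  have hd : x ⬝ᵥ N₀ *ᵥ x + 2 * (x ⬝ᵥ p₀)
      - (xstar ⬝ᵥ N₀ *ᵥ xstar + 2 * (xstar ⬝ᵥ p₀)) = 0 := by
    rw [← hp0x, ← hp0s]; linarith
  have hc : ξ * (x ⬝ᵥ N₀ *ᵥ x) + 2 * (ξ * (x ⬝ᵥ p₀))
      - (ξ * (xstar ⬝ᵥ N₀ *ᵥ xstar) + 2 * (ξ * (xstar ⬝ᵥ p₀))) = 0 := by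
    linear_combination ξ * hd
  rw [hexp] at key
  rw [e1, hxMs, hsMs] at key
  linarith [key, hc, e2, hsMs, hpx, hps]
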